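/- For any α > 0, any t* > 0, and any function φ ∈ L²(0, t*), the double integral ∫₀^{t*} (∫₀^t exp(-α(t-s)) φ(s) ds) φ(t) dt is nonnegative. -/

import Mathlib

open MeasureTheory Set Real Filter

noncomputable def gker (α u x : ℝ) : ℝ := if x ≤ u then Real.exp (-(α * (u - x))) else 0

lemma gker_nonneg (α u x : ℝ) : 0 ≤ gker α u x := by
  unfold gker; split <;> positivity

lemma gker_measurable (α : ℝ) : Measurable (fun p : ℝ × ℝ => gker α p.1 p.2) := by
  unfold gker
  exact Measurable.ite (measurableSet_le measurable_snd measurable_fst) (by fun_prop) measurable_const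

lemma integral_exp_neg_mul_Ioi {b : ℝ} (hb : 0 < b) (c : ℝ) :
    ∫ u in Set.Ioi c, Real.exp (-(b * u)) = Real.exp (-(b * c)) / b := by
  have hderiv : ∀ x ∈ Set.Ici c, HasDerivAt (fun u => -(Real.exp (-(b * u)) / b))
      (Real.exp (-(b * x))) x := by
    intro x _
    have h1 : HasDerivAt (fun u : ℝ => -(b * u)) (-b) x := by
      exact ((hasDerivAt_id x).const_mul b).neg.congr_deriv (by simp)
    have h2 := ((h1.exp).div_const b).neg
    exact h2.congr_deriv (by rw [mul_neg, neg_div, neg_neg, mul_div_assoc, div_self hb.ne', mul_one])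
  have hint : IntegrableOn (fun u => Real.exp (-(b * u))) (Set.Ioi c) := by
    simpa [neg_mul] using exp_neg_integrableOn_Ioi c hb
  have htend : Tendsto (fun u => -(Real.exp (-(b * u)) / b)) atTop (nhds 0) := by
    have : Tendsto (fun u : ℝ => Real.exp (-(b * u))) atTop (nhds 0) := by
      simpa [neg_mul] using Real.tendsto_exp_comp_nhds_zero.mpr
        (Filter.tendsto_id.const_mul_atTop_of_neg (neg_neg_iff_pos.mpr hb))
    simpa using (this.div_const b).neg
  have := integral_Ioi_of_hasDerivAt_of_tendsto' hderiv hint htend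
  rw [this]; ring

lemma gker_mul_eq (α : ℝ) (a b : ℝ) :
    (fun u => gker α u a * gker α u b)
      = Set.indicator (Set.Ici (max a b))
        (fun u => Real.exp (α * (a + b)) * Real.exp (-(2 * α * u))) := by
  funext u
  unfold gker
  rcases le_or_gt (max a b) u with h | h
  · have ha : a ≤ u := le_trans (le_max_left a b) h
    have hb' : b ≤ u := le_trans (le_max_right a b) h
    rw [if_pos ha, if_pos hb', Set.indicator_of_mem (Set.mem_Ici.mpr h), ← Real.exp_add,
      ← Real.exp_add]
    ring_nf
  · rw [Set.indicator_of_notMem (by simpa using not_le.mpr h)]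
    rcases max_cases a b with ⟨hm, _⟩ | ⟨hm, _⟩
    · rw [if_neg (not_le.mpr (h.trans_le hm.le)), zero_mul]
    · rw [if_neg (not_le.mpr (h.trans_le hm.le)), mul_zero]

lemma gker_mul_integrable (α : ℝ) (hα : 0 < α) (a b : ℝ) :
    Integrable (fun u => gker α u a * gker α u b) := by
  have h2α : (0:ℝ) < 2 * α := by linarith
  have hint0 : IntegrableOn (fun u : ℝ => Real.exp (-(2 * α * u))) (Set.Ioi (max a b)) := by
    have := exp_neg_integrableOn_Ioi (max a b) h2α
    simpa [neg_mul] using this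
  have hint : IntegrableOn (fun u => Real.exp (α * (a + b)) * Real.exp (-(2 * α * u)))
      (Set.Ici (max a b)) := by
    rw [integrableOn_Ici_iff_integrableOn_Ioi]
    exact hint0.const_mul _
  rw [gker_mul_eq]
  rwa [integrable_indicator_iff measurableSet_Ici]

lemma gker_mul_integral (α : ℝ) (hα : 0 < α) (a b : ℝ) :
    ∫ u, gker α u a * gker α u b = Real.exp (-(α * |a - b|)) / (2 * α) := by
  have h2α : (0:ℝ) < 2 * α := by linarith
  rw [gker_mul_eq, integral_indicator measurableSet_Ici,
    MeasureTheory.integral_Ici_eq_integral_Ioi, integral_const_mul,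
    integral_exp_neg_mul_Ioi h2α]
  rw [mul_div_assoc', ← Real.exp_add]
  congr 2
  rcases le_total a b with h | h
  · rw [max_eq_right h, abs_of_nonpos (by linarith)]; ring
  · rw [max_eq_left h, abs_of_nonneg (by linarith)]; ring

noncomputable def kker (α t s : ℝ) : ℝ := if s ≤ t then Real.exp (-(α * (t - s))) else 0

lemma kker_measurable (α : ℝ) : Measurable (fun p : ℝ × ℝ => kker α p.1 p.2) := by
  unfold kker
  exact Measurable.ite (measurableSet_le measurable_snd measurable_fst) (by fun_prop)
    measurable_const

lemma kker_nonneg (α t s : ℝ) (hα : 0 < α) : 0 ≤ kker α t s := by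
  unfold kker; split <;> positivity

lemma kker_le_one (α t s : ℝ) (hα : 0 < α) : kker α t s ≤ 1 := by
  unfold kker; split
  · exact Real.exp_le_one_iff.mpr (by nlinarith [sub_nonneg.mpr ‹s ≤ t›])
  · norm_num

lemma kker_add (α t s : ℝ) (h : t ≠ s) :
    kker α t s + kker α s t = Real.exp (-(α * |t - s|)) := by
  unfold kker
  rcases lt_or_gt_of_ne h with h' | h'
  · rw [if_neg (not_le.mpr h'), if_pos h'.le, abs_of_nonpos (by linarith), zero_add, neg_sub]
  · rw [if_pos h'.le, if_neg (not_le.mpr h'), abs_of_nonneg (by linarith), add_zero]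

theorem key (α : ℝ) (hα : 0 < α) (tstar : ℝ)
    (φ : ℝ → ℝ) (hsm : StronglyMeasurable φ)
    (hφ : MemLp φ 2 (volume.restrict (Set.Ioc (0:ℝ) tstar))) :
    0 ≤ ∫ t in Set.Ioc (0:ℝ) tstar,
        (∫ s in Set.Ioc (0:ℝ) t, Real.exp (-α * (t - s)) * φ s) * φ t := by
  set μ := volume.restrict (Set.Ioc (0:ℝ) tstar) with hμ
  haveI : IsFiniteMeasure μ :=
    ⟨by rw [hμ, Measure.restrict_apply_univ]; exact measure_Ioc_lt_top⟩
  have hφm : Measurable φ := hsm.measurable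
  have hφ1 : Integrable φ μ := hφ.integrable (by norm_num)
  set P := μ.prod μ with hP
  have habs : Integrable (fun p : ℝ × ℝ => |φ p.1| * |φ p.2|) P := hφ1.abs.mul_prod hφ1.abs
  set e1 : ℝ × ℝ → ℝ := fun p => (kker α p.1 p.2 * φ p.2) * φ p.1 with he1
  set e2 : ℝ × ℝ → ℝ := fun p => (kker α p.2 p.1 * φ p.2) * φ p.1 with he2
  set e : ℝ × ℝ → ℝ := fun p => Real.exp (-(α * |p.1 - p.2|)) * (φ p.2 * φ p.1) with he
  -- integrability of e1, e2, e
  have he1i : Integrable e1 P := by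
    apply habs.mono'
    · exact (((kker_measurable α).mul (hφm.comp measurable_snd)).mul
        (hφm.comp measurable_fst)).aestronglyMeasurable
    · refine Filter.Eventually.of_forall fun p => ?_
      have h0 := kker_nonneg α p.1 p.2 hα
      have h1 := kker_le_one α p.1 p.2 hα
      rw [Real.norm_eq_abs, abs_mul, abs_mul, abs_of_nonneg h0]
      calc kker α p.1 p.2 * |φ p.2| * |φ p.1| ≤ 1 * |φ p.2| * |φ p.1| := by
            apply mul_le_mul_of_nonneg_right _ (abs_nonneg _)
            exact mul_le_mul_of_nonneg_right h1 (abs_nonneg _)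
        _ = |φ p.1| * |φ p.2| := by ring
  have he2i : Integrable e2 P := by
    apply habs.mono'
    · exact ((((kker_measurable α).comp measurable_swap).mul (hφm.comp measurable_snd)).mul
        (hφm.comp measurable_fst)).aestronglyMeasurable
    · refine Filter.Eventually.of_forall fun p => ?_
      have h0 := kker_nonneg α p.2 p.1 hα
      have h1 := kker_le_one α p.2 p.1 hα
      rw [Real.norm_eq_abs, abs_mul, abs_mul, abs_of_nonneg h0]
      calc kker α p.2 p.1 * |φ p.2| * |φ p.1| ≤ 1 * |φ p.2| * |φ p.1| := by
            apply mul_le_mul_of_nonneg_right _ (abs_nonneg _)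
            exact mul_le_mul_of_nonneg_right h1 (abs_nonneg _)
        _ = |φ p.1| * |φ p.2| := by ring
  have hei : Integrable e P := by
    apply habs.mono'
    · apply Measurable.aestronglyMeasurable
      fun_prop
    · refine Filter.Eventually.of_forall fun p => ?_
      have h1 : Real.exp (-(α * |p.1 - p.2|)) ≤ 1 :=
        Real.exp_le_one_iff.mpr (by nlinarith [abs_nonneg (p.1 - p.2)])
      have h0 : (0:ℝ) ≤ Real.exp (-(α * |p.1 - p.2|)) := (Real.exp_pos _).le
      rw [Real.norm_eq_abs, abs_mul, abs_mul, abs_of_nonneg h0]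
      calc Real.exp (-(α * |p.1 - p.2|)) * (|φ p.2| * |φ p.1|)
          ≤ 1 * (|φ p.2| * |φ p.1|) := by
            apply mul_le_mul_of_nonneg_right h1 (by positivity)
        _ = |φ p.1| * |φ p.2| := by ring
  -- Step 1: goal integral equals ∫ e1 ∂P
  have hI1 : (∫ t in Set.Ioc (0:ℝ) tstar,
        (∫ s in Set.Ioc (0:ℝ) t, Real.exp (-α * (t - s)) * φ s) * φ t)
      = ∫ p, e1 p ∂P := by
    rw [hP, integral_prod _ he1i]
    have : ∀ t, (∫ s, e1 (t, s) ∂μ) = (∫ s, kker α t s * φ s ∂μ) * φ t := by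
      intro t
      exact integral_mul_const (φ t) (fun s => kker α t s * φ s)
    rw [show (fun t => ∫ s, e1 (t, s) ∂μ)
        = fun t => (∫ s, kker α t s * φ s ∂μ) * φ t from funext this]
    rw [hμ]
    apply setIntegral_congr_fun measurableSet_Ioc
    intro t ht
    dsimp only
    congr 1
    have hind : (fun s => kker α t s * φ s)
        = Set.indicator (Set.Iic t) (fun s => Real.exp (-α * (t - s)) * φ s) := by
      funext s
      unfold kker
      by_cases h : s ≤ t
      · rw [if_pos h, Set.indicator_of_mem (Set.mem_Iic.mpr h), neg_mul]
      · rw [if_neg h, Set.indicator_of_notMem (fun hc => h (Set.mem_Iic.mp hc)), zero_mul]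
    rw [hind, setIntegral_indicator measurableSet_Iic, Set.Ioc_inter_Iic, min_eq_right ht.2]
  -- swap symmetry
  have hswap : ∫ p, e2 p ∂P = ∫ p, e1 p ∂P := by
    rw [hP, ← integral_prod_swap e2]
    refine integral_congr_ae (Filter.Eventually.of_forall fun p => ?_)
    simp only [he1, he2, Prod.fst_swap, Prod.snd_swap]
    ring
  have hdiag : ∀ᵐ p ∂P, p.1 ≠ p.2 := by
    rw [ae_iff]
    have hset : {p : ℝ × ℝ | ¬ p.1 ≠ p.2} = {p : ℝ × ℝ | p.1 = p.2} := by simp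
    rw [hset, hP, Measure.prod_apply (measurableSet_eq_fun measurable_fst measurable_snd)]
    have h0 : ∀ t : ℝ, μ (Prod.mk t ⁻¹' {p : ℝ × ℝ | p.1 = p.2}) = 0 := by
      intro t
      have hpre : Prod.mk t ⁻¹' {p : ℝ × ℝ | p.1 = p.2} = {t} := by
        ext s; simp [eq_comm]
      rw [hpre, hμ, Measure.restrict_apply (measurableSet_singleton t)]
      exact measure_mono_null Set.inter_subset_left Real.volume_singleton
    simp [h0]
  have h2I : (∫ p, e1 p ∂P) + (∫ p, e2 p ∂P) = ∫ p, e p ∂P := by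
    rw [← integral_add he1i he2i]
    apply integral_congr_ae
    filter_upwards [hdiag] with p hp
    simp only [he1, he2, he, Pi.add_apply]
    rw [← kker_add α p.1 p.2 hp]
    ring
  set G : ℝ × ℝ → ℝ → ℝ := fun p u => (gker α u p.1 * φ p.1) * (gker α u p.2 * φ p.2) with hG
  have hGm : AEStronglyMeasurable (Function.uncurry G) (P.prod volume) := by
    apply Measurable.aestronglyMeasurable
    show Measurable fun q : (ℝ × ℝ) × ℝ =>
      (gker α q.2 q.1.1 * φ q.1.1) * (gker α q.2 q.1.2 * φ q.1.2)
    exact (((gker_measurable α).comp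
        (measurable_snd.prodMk (measurable_fst.comp measurable_fst))).mul
        (hφm.comp (measurable_fst.comp measurable_fst))).mul
      (((gker_measurable α).comp
        (measurable_snd.prodMk (measurable_snd.comp measurable_fst))).mul
        (hφm.comp (measurable_snd.comp measurable_fst)))
  have hGint : Integrable (Function.uncurry G) (P.prod volume) := by
    rw [integrable_prod_iff hGm]
    constructor
    · refine Filter.Eventually.of_forall fun p => ?_
      have h2 : (fun u => Function.uncurry G (p, u))
          = fun u => (gker α u p.1 * gker α u p.2) * (φ p.1 * φ p.2) := by
        funext u; simp only [Function.uncurry, hG]; ring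
      rw [h2]
      exact (gker_mul_integrable α hα p.1 p.2).mul_const _
    · have heqn : (fun p : ℝ × ℝ => ∫ u, ‖Function.uncurry G (p, u)‖)
          = fun p => Real.exp (-(α * |p.1 - p.2|)) / (2 * α) * (|φ p.1| * |φ p.2|) := by
        funext p
        have h1 : (fun u => ‖Function.uncurry G (p, u)‖)
            = fun u => (gker α u p.1 * gker α u p.2) * (|φ p.1| * |φ p.2|) := by
          funext u
          simp only [Function.uncurry, hG, Real.norm_eq_abs, abs_mul,
            abs_of_nonneg (gker_nonneg α u p.1), abs_of_nonneg (gker_nonneg α u p.2)]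
          ring
        rw [h1, integral_mul_const, gker_mul_integral α hα]
      rw [heqn]
      apply (habs.const_mul (1 / (2 * α))).mono'
      · apply Measurable.aestronglyMeasurable
        fun_prop
      · refine Filter.Eventually.of_forall fun p => ?_
        have h1 : Real.exp (-(α * |p.1 - p.2|)) ≤ 1 :=
          Real.exp_le_one_iff.mpr (by nlinarith [abs_nonneg (p.1 - p.2)])
        rw [Real.norm_eq_abs, abs_of_nonneg (by positivity)]
        gcongr
  have hval : ∫ p, e p ∂P
      = (2 * α) * ∫ u, (∫ x, gker α u x * φ x ∂μ) * (∫ x, gker α u x * φ x ∂μ) := by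
    have h1 : ∀ p : ℝ × ℝ, e p = (2 * α) * ∫ u, G p u := by
      intro p
      have h2 : (fun u => G p u) = fun u => (gker α u p.1 * gker α u p.2) * (φ p.1 * φ p.2) := by
        funext u; simp only [hG]; ring
      rw [h2, integral_mul_const, gker_mul_integral α hα, he]
      field_simp
    rw [show e = fun p => (2 * α) * ∫ u, G p u from funext h1, integral_const_mul]
    congr 1
    rw [hP, integral_integral_swap hGint]
    refine integral_congr_ae (Filter.Eventually.of_forall fun u => ?_)
    exact integral_prod_mul (fun x => gker α u x * φ x) (fun x => gker α u x * φ x)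
  have hnn : 0 ≤ ∫ p, e p ∂P := by
    rw [hval]
    apply mul_nonneg (by linarith)
    exact integral_nonneg fun u => mul_self_nonneg _
  rw [hI1]
  linarith [hswap, h2I, hnn]

theorem positivity_of_exponential_memory_kernel
    (α : ℝ) (hα : 0 < α) (tstar : ℝ) (htstar : 0 < tstar)
    (φ : ℝ → ℝ)
    (hφ : MemLp φ 2 (volume.restrict (Set.Ioc (0:ℝ) tstar))) :
    0 ≤ ∫ t in Set.Ioc (0:ℝ) tstar,
        (∫ s in Set.Ioc (0:ℝ) t, Real.exp (-α * (t - s)) * φ s) * φ t := by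
  obtain ⟨ψ, hψsm, hψe⟩ := hφ.aestronglyMeasurable
  have hψ : MemLp ψ 2 (volume.restrict (Set.Ioc (0:ℝ) tstar)) := hφ.ae_eq hψe
  have hmain := key α hα tstar ψ hψsm hψ
  have houter : ∫ t in Set.Ioc (0:ℝ) tstar,
        (∫ s in Set.Ioc (0:ℝ) t, Real.exp (-α * (t - s)) * φ s) * φ t
      = ∫ t in Set.Ioc (0:ℝ) tstar,
        (∫ s in Set.Ioc (0:ℝ) t, Real.exp (-α * (t - s)) * ψ s) * ψ t := by
    apply integral_congr_ae
    filter_upwards [hψe, ae_restrict_mem measurableSet_Ioc] with t hφt ht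
    have hinner : ∫ s in Set.Ioc (0:ℝ) t, Real.exp (-α * (t - s)) * φ s
        = ∫ s in Set.Ioc (0:ℝ) t, Real.exp (-α * (t - s)) * ψ s := by
      apply integral_congr_ae
      have hsub : ∀ᵐ s ∂(volume.restrict (Set.Ioc (0:ℝ) t)), φ s = ψ s :=
        ae_restrict_of_ae_restrict_of_subset (Set.Ioc_subset_Ioc_right ht.2) hψe
      filter_upwards [hsub] with s hs
      rw [hs]
    rw [hinner, hφt]
  rw [houter]
  exact hmain
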